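/- Let f: R^d → R be μ-strongly convex and L-smooth with minimum f*. Consider iterates θ_{t+1} = θ_t − (1/L)(γ_t ⊙ g_t) where, conditional on θ_t, g_t has mean ∇f(θ_t) and element-wise variances σ_{t,i}², and γ_{t,i} = ∇f(θ_t)_i²/(∇f(θ_t)_i² + σ_{t,i}²). Then the conditional expected decrease satisfies E_t[f(θ_{t+1})] ≤ f(θ_t) − (1/(2L)) Σ_{i=1}^d ∇f(θ_t)_i⁴/(∇f(θ_t)_i² + σ_{t,i}²). -/

import Mathlib

open MeasureTheory

private theorem svag_descent {d : ℕ} (f : EuclideanSpace ℝ (Fin d) → ℝ)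
    (gradf : EuclideanSpace ℝ (Fin d) → EuclideanSpace ℝ (Fin d)) (L : ℝ) (hL : 0 < L)
    (hgrad : ∀ x, HasGradientAt f (gradf x) x)
    (hsm : ∀ x y, ‖gradf x - gradf y‖ ≤ L * ‖x - y‖)
    (x v : EuclideanSpace ℝ (Fin d)) :
    f (x + v) ≤ f x + inner ℝ (gradf x) v + L / 2 * ‖v‖ ^ 2 := by
  have hcont : Continuous gradf := by
    have : LipschitzWith (Real.toNNReal L) gradf := by
      apply LipschitzWith.of_dist_le_mul
      intro a b
      rw [dist_eq_norm, dist_eq_norm, Real.coe_toNNReal _ hL.le]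
      exact hsm a b
    exact this.continuous
  set φ : ℝ → ℝ := fun t => f (x + t • v) with hφ
  have hline : ∀ t : ℝ, HasDerivAt (fun t : ℝ => x + t • v) v t := by
    intro t
    simpa using ((hasDerivAt_id t).smul_const v).const_add x
  have hderiv : ∀ t : ℝ, HasDerivAt φ (inner ℝ (gradf (x + t • v)) v) t := by
    intro t
    have h1 := (hgrad (x + t • v)).hasFDerivAt
    have := h1.comp_hasDerivAt t (hline t)
    have h2 : HasDerivAt (f ∘ fun t : ℝ => x + t • v) (inner ℝ (gradf (x + t • v)) v) t := by
      simpa using this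
    exact h2
  have hcont2 : Continuous fun t : ℝ => (inner ℝ (gradf (x + t • v)) v : ℝ) := by
    exact (hcont.comp (by continuity)).inner continuous_const
  have hftc : ∫ t in (0:ℝ)..1, (inner ℝ (gradf (x + t • v)) v : ℝ) = f (x + v) - f x := by
    have := intervalIntegral.integral_eq_sub_of_hasDerivAt
      (f := φ) (f' := fun t => (inner ℝ (gradf (x + t • v)) v : ℝ))
      (fun t _ => hderiv t) (hcont2.intervalIntegrable 0 1)
    simpa [hφ] using this
  have hbound : ∀ t ∈ Set.Icc (0:ℝ) 1,
      (inner ℝ (gradf (x + t • v)) v : ℝ) ≤ inner ℝ (gradf x) v + L * t * ‖v‖ ^ 2 := by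
    intro t ht
    have h1 : (inner ℝ (gradf (x + t • v)) v : ℝ) - inner ℝ (gradf x) v
        = inner ℝ (gradf (x + t • v) - gradf x) v := by
      rw [inner_sub_left]
    have h2 : (inner ℝ (gradf (x + t • v) - gradf x) v : ℝ) ≤ L * t * ‖v‖ ^ 2 := by
      calc (inner ℝ (gradf (x + t • v) - gradf x) v : ℝ)
          ≤ ‖gradf (x + t • v) - gradf x‖ * ‖v‖ := real_inner_le_norm _ _
        _ ≤ (L * ‖x + t • v - x‖) * ‖v‖ := by
            have := hsm (x + t • v) x
            exact mul_le_mul_of_nonneg_right this (norm_nonneg v)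
        _ = L * t * ‖v‖ ^ 2 := by
            rw [add_sub_cancel_left, norm_smul]
            simp [Real.norm_eq_abs, abs_of_nonneg ht.1]
            ring
    linarith [h1, h2]
  have heq : (fun t : ℝ => (inner ℝ (gradf x) v : ℝ) + L * t * ‖v‖ ^ 2)
      = fun t : ℝ => (inner ℝ (gradf x) v : ℝ) + (L * ‖v‖ ^ 2) * t := by
    funext t; ring
  have hc1 : Continuous (fun t : ℝ => (inner ℝ (gradf x) v : ℝ) + (L * ‖v‖ ^ 2) * t) :=
    continuous_const.add (continuous_const.mul continuous_id)
  have hint1 : IntervalIntegrable (fun t : ℝ => (inner ℝ (gradf x) v : ℝ) + L * t * ‖v‖ ^ 2)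
      MeasureTheory.volume 0 1 := by
    rw [heq]; exact hc1.intervalIntegrable 0 1
  have hmono := intervalIntegral.integral_mono_on (by norm_num)
    (hcont2.intervalIntegrable 0 1) hint1 hbound
  have hrhs : ∫ t in (0:ℝ)..1, ((inner ℝ (gradf x) v : ℝ) + L * t * ‖v‖ ^ 2)
      = inner ℝ (gradf x) v + L / 2 * ‖v‖ ^ 2 := by
    rw [heq, intervalIntegral.integral_add (by
        exact (continuous_const (y := (inner ℝ (gradf x) v : ℝ))).intervalIntegrable 0 1)
      (by exact (continuous_const.mul continuous_id).intervalIntegrable 0 1)]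
    rw [intervalIntegral.integral_const_mul, integral_id,
      intervalIntegral.integral_const]
    simp; ring
  rw [hftc] at hmono
  rw [hrhs] at hmono
  linarith


/-- One step of idealized SVAG: with `γ_i = ∇f_i²/(∇f_i² + σ_i²)` and an unbiased
stochastic gradient `g` with element-wise variances `σ_i²`, the expected function value
after the update `θ' = θ − (1/L)(γ ⊙ g)` satisfies
`E[f(θ')] ≤ f(θ) − (1/(2L)) Σ_i ∇f_i⁴/(∇f_i² + σ_i²)`. -/
theorem svag_step_decrease (d : ℕ) {Ω : Type*} [MeasurableSpace Ω]
    (P : Measure Ω) [IsProbabilityMeasure P]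
    (f : EuclideanSpace ℝ (Fin d) → ℝ)
    (gradf : EuclideanSpace ℝ (Fin d) → EuclideanSpace ℝ (Fin d))
    (μ L : ℝ) (hμ : 0 < μ) (hL : 0 < L)
    (hgrad : ∀ x, HasGradientAt f (gradf x) x)
    (hsc : ∀ x y, f y ≥ f x + inner ℝ (gradf x) (y - x) + μ / 2 * ‖y - x‖ ^ 2)
    (hsm : ∀ x y, ‖gradf x - gradf y‖ ≤ L * ‖x - y‖)
    (θ : EuclideanSpace ℝ (Fin d)) (g : Ω → EuclideanSpace ℝ (Fin d)) (σ : Fin d → ℝ)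
    (hint : ∀ i, Integrable (fun ω => g ω i) P)
    (hint2 : ∀ i, Integrable (fun ω => (g ω i) ^ 2) P)
    (hmean : ∀ i, ∫ ω, g ω i ∂P = gradf θ i)
    (hvar : ∀ i, ∫ ω, (g ω i - gradf θ i) ^ 2 ∂P = (σ i) ^ 2)
    (γ : Fin d → ℝ)
    (hγ : ∀ i, γ i = (gradf θ i) ^ 2 / ((gradf θ i) ^ 2 + (σ i) ^ 2))
    (θ' : Ω → EuclideanSpace ℝ (Fin d))
    (hθ' : ∀ ω i, θ' ω i = θ i - (1 / L) * (γ i * g ω i))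
    (hintf : Integrable (fun ω => f (θ' ω)) P) :
    ∫ ω, f (θ' ω) ∂P ≤
      f θ - (1 / (2 * L)) * ∑ i, (gradf θ i) ^ 4 / ((gradf θ i) ^ 2 + (σ i) ^ 2) := by
  have descent : ∀ x v : EuclideanSpace ℝ (Fin d),
      f (x + v) ≤ f x + inner ℝ (gradf x) v + L / 2 * ‖v‖ ^ 2 :=
    svag_descent f gradf L hL hgrad hsm
  set c1 : Fin d → ℝ := fun i => -(1 / L) * (γ i * gradf θ i) with hc1
  set c2 : Fin d → ℝ := fun i => L / 2 * ((1 / L) * γ i) ^ 2 with hc2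
  set RHS : Ω → ℝ := fun ω => f θ + ∑ i, (c1 i * g ω i + c2 i * (g ω i) ^ 2) with hRHS
  -- pointwise bound
  have hpt : ∀ ω, f (θ' ω) ≤ RHS ω := by
    intro ω
    have hv : θ' ω = θ + (θ' ω - θ) := by abel
    have hb := descent θ (θ' ω - θ)
    rw [← hv] at hb
    refine hb.trans_eq ?_
    have hvi : ∀ i, (θ' ω - θ) i = -((1 / L) * (γ i * g ω i)) := by
      intro i
      simp [hθ' ω i, sub_eq_add_neg]
    have hinner : (inner ℝ (gradf θ) (θ' ω - θ) : ℝ) = ∑ i, gradf θ i * (θ' ω - θ) i := by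
      rw [PiLp.inner_apply]
      simp [RCLike.inner_apply]
      exact Finset.sum_congr rfl fun i _ => mul_comm _ _
    have hnorm : ‖θ' ω - θ‖ ^ 2 = ∑ i, ((θ' ω - θ) i) ^ 2 := by
      rw [← real_inner_self_eq_norm_sq, PiLp.inner_apply]
      simp [RCLike.inner_apply, sq]
    rw [hRHS, hinner, hnorm]
    rw [Finset.mul_sum, add_assoc, ← Finset.sum_add_distrib]
    congr 1
    apply Finset.sum_congr rfl
    intro i _
    rw [hvi i, hc1, hc2]
    field_simp
  -- integrability of RHS
  have hintterm : ∀ i : Fin d, Integrable (fun ω => c1 i * g ω i + c2 i * (g ω i) ^ 2) P :=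
    fun i => ((hint i).const_mul _).add ((hint2 i).const_mul _)
  have hintsum : Integrable (fun ω => ∑ i, (c1 i * g ω i + c2 i * (g ω i) ^ 2)) P :=
    integrable_finset_sum _ fun i _ => hintterm i
  have hintRHS : Integrable RHS P := (integrable_const _).add hintsum
  have hmono := integral_mono hintf hintRHS hpt
  refine hmono.trans ?_
  -- second moment
  have hM2 : ∀ i, ∫ ω, (g ω i) ^ 2 ∂P = (σ i) ^ 2 + (gradf θ i) ^ 2 := by
    intro i
    have hexp : (fun ω => (g ω i - gradf θ i) ^ 2)
        = fun ω => (g ω i) ^ 2 - (2 * gradf θ i) * g ω i + (gradf θ i) ^ 2 := by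
      funext ω; ring
    have hB : Integrable (fun ω => (2 * gradf θ i) * g ω i) P := (hint i).const_mul _
    have hA : Integrable (fun ω => (g ω i) ^ 2 - (2 * gradf θ i) * g ω i) P :=
      (hint2 i).sub hB
    have h := hvar i
    rw [hexp, integral_add hA (integrable_const _), integral_sub (hint2 i) hB,
      integral_const_mul, hmean i, integral_const] at h
    simp only [measure_univ, ENNReal.toReal_one, probReal_univ, one_smul, smul_eq_mul, one_mul] at h
    nlinarith [h]
  -- compute integral of RHS
  have hI : ∫ ω, RHS ω ∂P = f θ + ∑ i, (c1 i * gradf θ i + c2 i * ((σ i) ^ 2 + (gradf θ i) ^ 2)) := by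
    rw [hRHS, integral_add (integrable_const _) hintsum, integral_const]
    simp only [measure_univ, ENNReal.toReal_one, probReal_univ, one_smul]
    congr 1
    rw [integral_finset_sum _ fun i _ => hintterm i]
    apply Finset.sum_congr rfl
    intro i _
    have hB1 : Integrable (fun ω => c1 i * g ω i) P := (hint i).const_mul _
    have hB2 : Integrable (fun ω => c2 i * (g ω i) ^ 2) P := (hint2 i).const_mul _
    rw [integral_add hB1 hB2, integral_const_mul, integral_const_mul, hmean i, hM2 i]
  rw [hI]
  -- termwise algebra
  have hterm : ∀ i : Fin d, c1 i * gradf θ i + c2 i * ((σ i) ^ 2 + (gradf θ i) ^ 2)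
      = -(1 / (2 * L)) * ((gradf θ i) ^ 4 / ((gradf θ i) ^ 2 + (σ i) ^ 2)) := by
    intro i
    have hs : 0 ≤ (σ i) ^ 2 := sq_nonneg _
    have ha : 0 ≤ (gradf θ i) ^ 2 := sq_nonneg _
    rcases eq_or_lt_of_le (add_nonneg ha hs) with h0 | hpos
    · have ha0 : gradf θ i = 0 := by
        have := h0.symm
        nlinarith [sq_nonneg (gradf θ i), sq_nonneg (σ i)]
      simp [hc1, hc2, hγ i, ha0]
    · have hne : (gradf θ i) ^ 2 + (σ i) ^ 2 ≠ 0 := ne_of_gt hpos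
      simp only [hc1, hc2, hγ i]
      field_simp
      ring
  rw [Finset.sum_congr rfl fun i _ => hterm i, ← Finset.mul_sum]
  have : -(1 / (2 * L)) * (∑ i, (gradf θ i) ^ 4 / ((gradf θ i) ^ 2 + (σ i) ^ 2))
      = -((1 / (2 * L)) * ∑ i, (gradf θ i) ^ 4 / ((gradf θ i) ^ 2 + (σ i) ^ 2)) := by ring
  rw [this]
  linarith
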